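/- The Conrad relation on M_n(F), for F a field, defined by A ρ B if and only if A·S·A = A·S·B and A·S·B = B·S·A for all S ∈ M_n(F), is a partial order (reflexive, antisymmetric, and transitive). -/

import Mathlib

private lemma conrad_key {F : Type*} [Field F] {n : ℕ}
    (A C : Matrix (Fin n) (Fin n) F) (h : ∀ S : Matrix (Fin n) (Fin n) F, A * S * C = 0) :
    A = 0 ∨ C = 0 := by
  by_cases hA : A = 0
  · exact Or.inl hA
  · right
    obtain ⟨k, i, hki⟩ : ∃ k i, A k i ≠ 0 := by
      by_contra hc
      push_neg at hc
      exact hA (Matrix.ext fun k i => hc k i)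
    ext j l
    have h2 := congrArg (fun M : Matrix (Fin n) (Fin n) F => M k l)
      (h (Matrix.single i j (1 : F)))
    simp only [Matrix.zero_apply] at h2
    have h3 : (A * Matrix.single i j (1 : F) * C) k l = A k i * C j l := by
      rw [Matrix.mul_apply, Finset.sum_eq_single j]
      · simp
      · intro b _ hb
        simp [Matrix.mul_single_apply_of_ne (hbj := hb)]
      · simp
    rw [h3] at h2
    rcases mul_eq_zero.mp h2 with h4 | h4
    · exact absurd h4 hki
    · simpa using h4

/-- The Conrad relation on `M_n(F)` is a partial order. -/
theorem conrad_matrix_partialOrder {F : Type*} [Field F] (n : ℕ) :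
    Reflexive (fun A B : Matrix (Fin n) (Fin n) F =>
      ∀ S : Matrix (Fin n) (Fin n) F, A * S * A = A * S * B ∧ A * S * B = B * S * A) ∧
    AntiSymmetric (fun A B : Matrix (Fin n) (Fin n) F =>
      ∀ S : Matrix (Fin n) (Fin n) F, A * S * A = A * S * B ∧ A * S * B = B * S * A) ∧
    Transitive (fun A B : Matrix (Fin n) (Fin n) F =>
      ∀ S : Matrix (Fin n) (Fin n) F, A * S * A = A * S * B ∧ A * S * B = B * S * A) := by
  have main : ∀ A B : Matrix (Fin n) (Fin n) F,
      (∀ S : Matrix (Fin n) (Fin n) F, A * S * A = A * S * B ∧ A * S * B = B * S * A) →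
      A = 0 ∨ A = B := by
    intro A B h
    have h0 : ∀ S : Matrix (Fin n) (Fin n) F, A * S * (A - B) = 0 := by
      intro S
      rw [Matrix.mul_sub, (h S).1, sub_self]
    rcases conrad_key A (A - B) h0 with h1 | h1
    · exact Or.inl h1
    · exact Or.inr (sub_eq_zero.mp h1)
  have triv : ∀ A B : Matrix (Fin n) (Fin n) F, (A = 0 ∨ A = B) →
      (∀ S : Matrix (Fin n) (Fin n) F, A * S * A = A * S * B ∧ A * S * B = B * S * A) := by
    rintro A B (rfl | rfl) S <;> simp
  refine ⟨fun A => triv A A (Or.inr rfl), ?_, ?_⟩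
  · intro A B hab hba
    rcases main A B hab with rfl | rfl
    · rcases main B 0 hba with rfl | h
      · rfl
      · exact h.symm
    · rfl
  · intro A B C hab hbc
    rcases main A B hab with rfl | rfl
    · exact triv 0 C (Or.inl rfl)
    · exact hbc
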